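/- Let L ≥ 1, h, a ∈ ℂ^L with a ≠ 0, and P ≥ 0 real. Then ‖a‖² − P|⟨h,a⟩|²/(1 + P‖h‖²) ≥ ‖a‖²/(1 + P‖h‖²) > 0, where ⟨h,a⟩ = Σ_l conj(h_l) a_l. Consequently the computation rate expression log⁺((‖a‖² − P|⟨h,a⟩|²/(1 + P‖h‖²))^{−1}) is at most log⁺((1 + P‖h‖²)/‖a‖²); in particular it is strictly positive only if ‖a‖² < 1 + P‖h‖². -/

import Mathlib

/-- log⁺(x) = max(log₂ x, 0). -/
noncomputable def logPlus (x : ℝ) : ℝ := max (Real.logb 2 x) 0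

lemma cs_aux (L : ℕ) (h a : Fin L → ℂ) :
    ‖∑ l, (starRingEnd ℂ) (h l) * a l‖ ^ 2 ≤
      (∑ l, ‖h l‖ ^ 2) * (∑ l, ‖a l‖ ^ 2) := by
  let h' : EuclideanSpace ℂ (Fin L) := WithLp.toLp 2 h
  let a' : EuclideanSpace ℂ (Fin L) := WithLp.toLp 2 a
  have hcs := @norm_inner_le_norm ℂ (EuclideanSpace ℂ (Fin L)) _ _ _ h' a'
  rw [PiLp.inner_apply] at hcs
  simp only [RCLike.inner_apply] at hcs
  have hh : ‖h'‖ ^ 2 = ∑ l, ‖h l‖ ^ 2 := by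
    rw [EuclideanSpace.norm_eq, Real.sq_sqrt (by positivity)]
  have haa : ‖a'‖ ^ 2 = ∑ l, ‖a l‖ ^ 2 := by
    rw [EuclideanSpace.norm_eq, Real.sq_sqrt (by positivity)]
  calc ‖∑ l, (starRingEnd ℂ) (h l) * a l‖ ^ 2
      = ‖∑ x, a'.ofLp x * (starRingEnd ℂ) (h'.ofLp x)‖ ^ 2 := by simp [h', a', mul_comm]
    _ ≤ (‖h'‖ * ‖a'‖) ^ 2 := pow_le_pow_left₀ (norm_nonneg _) hcs 2
    _ = (∑ l, ‖h l‖ ^ 2) * (∑ l, ‖a l‖ ^ 2) := by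
        rw [mul_pow, hh, haa]

set_option maxHeartbeats 1000000 in
lemma sum_sq_pos (L : ℕ) (a : Fin L → ℂ) (ha : a ≠ 0) :
    0 < ∑ l, ‖a l‖ ^ 2 := by
  obtain ⟨l, hl⟩ := Function.ne_iff.mp ha
  have h1 : 0 < ‖a l‖ ^ 2 := pow_pos (norm_pos_iff.mpr hl) 2
  exact Finset.sum_pos' (fun i _ => pow_nonneg (norm_nonneg _) 2)
    ⟨l, Finset.mem_univ l, h1⟩

/-- For a ≠ 0 and P ≥ 0: ‖a‖² − P|⟨h,a⟩|²/(1+P‖h‖²) ≥ ‖a‖²/(1+P‖h‖²) > 0;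
consequently log⁺((‖a‖² − P|⟨h,a⟩|²/(1+P‖h‖²))⁻¹) ≤ log⁺((1+P‖h‖²)/‖a‖²), and
the computation rate is strictly positive only if ‖a‖² < 1 + P‖h‖². -/
theorem stmt_19 (L : ℕ) (hL : 1 ≤ L) (h a : Fin L → ℂ) (ha : a ≠ 0)
    (P : ℝ) (hP : 0 ≤ P) :
    (∑ l, ‖a l‖ ^ 2) / (1 + P * ∑ l, ‖h l‖ ^ 2) ≤
      (∑ l, ‖a l‖ ^ 2) -
        P * ‖∑ l, (starRingEnd ℂ) (h l) * a l‖ ^ 2 /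
          (1 + P * ∑ l, ‖h l‖ ^ 2) ∧
    0 < (∑ l, ‖a l‖ ^ 2) / (1 + P * ∑ l, ‖h l‖ ^ 2) ∧
    logPlus (((∑ l, ‖a l‖ ^ 2) -
        P * ‖∑ l, (starRingEnd ℂ) (h l) * a l‖ ^ 2 /
          (1 + P * ∑ l, ‖h l‖ ^ 2))⁻¹) ≤
      logPlus ((1 + P * ∑ l, ‖h l‖ ^ 2) / ∑ l, ‖a l‖ ^ 2) ∧
    (0 < logPlus (((∑ l, ‖a l‖ ^ 2) -
        P * ‖∑ l, (starRingEnd ℂ) (h l) * a l‖ ^ 2 /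
          (1 + P * ∑ l, ‖h l‖ ^ 2))⁻¹) →
      (∑ l, ‖a l‖ ^ 2) < 1 + P * ∑ l, ‖h l‖ ^ 2) := by
  set A := ∑ l, ‖a l‖ ^ 2 with hA
  set H := ∑ l, ‖h l‖ ^ 2 with hH
  set S := ‖∑ l, (starRingEnd ℂ) (h l) * a l‖ ^ 2 with hS
  have hHnn : 0 ≤ H := Finset.sum_nonneg fun l _ => by positivity
  have hApos : 0 < A := sum_sq_pos L a ha
  have hD : 0 < 1 + P * H := by nlinarith
  have hcs : S ≤ H * A := cs_aux L h a
  have key : A / (1 + P * H) ≤ A - P * S / (1 + P * H) := by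
    have h1 : P * S / (1 + P * H) ≤ P * (H * A) / (1 + P * H) := by
      apply div_le_div_of_nonneg_right (by exact mul_le_mul_of_nonneg_left hcs hP) hD.le
    have h2 : A - P * (H * A) / (1 + P * H) = A / (1 + P * H) := by
      field_simp
      ring
    linarith
  have hADpos : 0 < A / (1 + P * H) := div_pos hApos hD
  have hxpos : 0 < A - P * S / (1 + P * H) := lt_of_lt_of_le hADpos key
  have hinv : (A - P * S / (1 + P * H))⁻¹ ≤ (1 + P * H) / A := by
    calc (A - P * S / (1 + P * H))⁻¹ ≤ (A / (1 + P * H))⁻¹ :=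
          inv_anti₀ hADpos key
      _ = (1 + P * H) / A := inv_div A (1 + P * H)
  refine ⟨key, hADpos, ?_, ?_⟩
  · exact max_le_max (Real.logb_le_logb_of_le (by norm_num) (inv_pos.mpr hxpos) hinv) le_rfl
  · intro hpos
    have hlog : 0 < Real.logb 2 (A - P * S / (1 + P * H))⁻¹ := by
      rcases lt_max_iff.mp hpos with h' | h'
      · exact h'
      · exact absurd h' (lt_irrefl 0)
    have h1 : 1 < (A - P * S / (1 + P * H))⁻¹ :=
      (Real.logb_pos_iff (by norm_num) (by positivity)).mp hlog
    have h2 : A - P * S / (1 + P * H) < 1 := (one_lt_inv_iff₀.mp h1).2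
    have : A / (1 + P * H) < 1 := lt_of_le_of_lt key h2
    exact (div_lt_one hD).mp this
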